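/- For any finite simple graph H and n ≥ 1, π(S_n ∘ H) = π(H) + |V(H)|, where S_n is the star on n+1 vertices. -/

import Mathlib

/-- A list is a repetition if it is of the form `w ++ w` for a nonempty `w`. -/
def IsRepetition {α : Type*} (l : List α) : Prop := ∃ w : List α, w ≠ [] ∧ l = w ++ w

/-- A list is non-repetitive if no block of consecutive elements is a repetition. -/
def NonRepetitive {α : Type*} (l : List α) : Prop :=
  ∀ t : List α, t <:+: l → ¬ IsRepetition t

/-- A vertex colouring is non-repetitive if the colour sequence of every path
is not a repetition. -/
def NonRepColoring {V β : Type*} (G : SimpleGraph V) (φ : V → β) : Prop :=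
  ∀ ⦃u v : V⦄ (p : G.Walk u v), p.IsPath → ¬ IsRepetition (p.support.map φ)

/-- The Thue chromatic number: minimum number of colours of a non-repetitive colouring. -/
noncomputable def thueNumber {V : Type*} [Fintype V] (G : SimpleGraph V) : ℕ :=
  sInf {k | ∃ φ : V → Fin k, NonRepColoring G φ}

/-- The Thue choice number: least `k` such that from any lists of size at least `k`
one can choose a non-repetitive colouring. -/
noncomputable def thueChoiceNumber {V : Type*} [Fintype V] (G : SimpleGraph V) : ℕ :=
  sInf {k | ∀ L : V → Finset ℕ, (∀ v, k ≤ (L v).card) →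
    ∃ φ : V → ℕ, (∀ v, φ v ∈ L v) ∧ NonRepColoring G φ}

/-- The independence number of a graph. -/
noncomputable def indepNum {V : Type*} [Fintype V] (G : SimpleGraph V) : ℕ :=
  sSup {n | ∃ s : Finset V, (∀ a ∈ s, ∀ b ∈ s, ¬ G.Adj a b) ∧ s.card = n}

/-- The lexicographic product of two simple graphs. -/
def lexProd {V W : Type*} (G : SimpleGraph V) (H : SimpleGraph W) : SimpleGraph (V × W) where
  Adj x y := G.Adj x.1 y.1 ∨ (x.1 = y.1 ∧ H.Adj x.2 y.2)
  symm := by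
    constructor
    rintro x y (h | ⟨h1, h2⟩)
    · exact Or.inl h.symm
    · exact Or.inr ⟨h1.symm, h2.symm⟩
  loopless := by
    constructor
    rintro x (h | ⟨h1, h2⟩)
    · exact G.loopless.irrefl _ h
    · exact H.loopless.irrefl _ h2

section Helpers

open SimpleGraph List

variable {α β : Type*}

lemma not_isRepetition_of_nodup {l : List α} (h : l.Nodup) : ¬ IsRepetition l := by
  rintro ⟨w, hw, rfl⟩
  rw [List.nodup_append] at h
  cases w with
  | nil => exact hw rfl
  | cons a t => exact h.2.2 a List.mem_cons_self a List.mem_cons_self rfl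

lemma nonRep_of_injective {V : Type*} (G : SimpleGraph V) {φ : V → β}
    (hφ : Function.Injective φ) : NonRepColoring G φ :=
  fun _ _ _ hp => not_isRepetition_of_nodup (hp.support_nodup.map hφ)

lemma map_eq_map_of_injOn {θ : α → β} {S : Set α} (hθ : Set.InjOn θ S) :
    ∀ (l₁ l₂ : List α), l₁.map θ = l₂.map θ →
      (∀ x ∈ l₁, x ∈ S) → (∀ x ∈ l₂, x ∈ S) → l₁ = l₂ := by
  intro l₁
  induction l₁ with
  | nil => intro l₂ h _ _; cases l₂ <;> simp_all
  | cons a t ih =>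
    intro l₂ h h1 h2
    cases l₂ with
    | nil => simp at h
    | cons b t₂ =>
      simp only [List.map_cons, List.cons.injEq] at h
      have hab : a = b := hθ (h1 a (by simp)) (h2 b (by simp)) h.1
      rw [hab, ih t₂ h.2 (fun x hx => h1 x (by simp [hx])) (fun x hx => h2 x (by simp [hx]))]

lemma isRepetition_of_map {θ : α → β} {S : Set α} (hθ : Set.InjOn θ S) {l : List α}
    (hl : ∀ x ∈ l, x ∈ S) (h : IsRepetition (l.map θ)) : IsRepetition l := by
  obtain ⟨u, hu, he⟩ := h
  have hlt : (l.take u.length).map θ = u := by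
    rw [List.map_take, he, List.take_left]
  have hld : (l.drop u.length).map θ = u := by
    rw [List.map_drop, he, List.drop_left]
  have heq : l.take u.length = l.drop u.length :=
    map_eq_map_of_injOn hθ _ _ (hlt.trans hld.symm)
      (fun x hx => hl x (List.take_subset _ _ hx))
      (fun x hx => hl x (List.drop_subset _ _ hx))
  refine ⟨l.take u.length, ?_, ?_⟩
  · intro h0
    rw [h0] at hlt
    exact hu hlt.symm
  · conv_lhs => rw [← List.take_append_drop u.length l]
    rw [heq]

lemma isRepetition_of_map_inj {θ : α → β} (hθ : Function.Injective θ) {l : List α}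
    (h : IsRepetition (l.map θ)) : IsRepetition l :=
  isRepetition_of_map (S := Set.univ) (hθ.injOn) (fun _ _ => trivial) h

/-- The embedding of `H` into the copy of `H` over `s` in `G ∘ H`. -/
def copyHom {V W : Type*} (G : SimpleGraph V) (H : SimpleGraph W) (s : V) :
    H →g lexProd G H where
  toFun w := (s, w)
  map_rel' h := Or.inr ⟨rfl, h⟩

lemma copyHom_injective {V W : Type*} (G : SimpleGraph V) (H : SimpleGraph W) (s : V) :
    Function.Injective (copyHom G H s) := by
  intro a b h
  exact congrArg Prod.snd h

lemma nonRep_copy {V W : Type*} {G : SimpleGraph V} {H : SimpleGraph W} (s : V)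
    {ψ : V × W → β} (hψ : NonRepColoring (lexProd G H) ψ) :
    NonRepColoring H (fun w => ψ (s, w)) := by
  intro u v q hq hrep
  refine hψ (q.map (copyHom G H s))
    (SimpleGraph.Walk.map_isPath_of_injective (copyHom_injective G H s) hq) ?_
  rw [SimpleGraph.Walk.support_map, List.map_map]
  exact hrep

lemma lift_walk {V W : Type*} {G : SimpleGraph V} {H : SimpleGraph W} :
    ∀ {x y : V × W} (p : (lexProd G H).Walk x y), (∀ z ∈ p.support, z.1 = x.1) →
      ∃ q : H.Walk x.2 y.2, p.support = q.support.map (fun w => (x.1, w)) := by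
  intro x y p
  induction p with
  | nil => exact fun _ => ⟨SimpleGraph.Walk.nil, by simp⟩
  | @cons a b c h p ih =>
    intro hsup
    have hb1 : b.1 = a.1 := hsup b (by
      rw [SimpleGraph.Walk.support_cons]
      exact List.mem_cons_of_mem _ p.start_mem_support)
    have hH : H.Adj a.2 b.2 := by
      rcases h with hg | ⟨_, hh⟩
      · rw [hb1] at hg
        exact absurd hg (G.loopless.irrefl _)
      · exact hh
    obtain ⟨q, hq⟩ := ih (fun z hz => (hsup z (by
      rw [SimpleGraph.Walk.support_cons]
      exact List.mem_cons_of_mem _ hz)).trans hb1.symm)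
    refine ⟨SimpleGraph.Walk.cons hH q, ?_⟩
    rw [SimpleGraph.Walk.support_cons, SimpleGraph.Walk.support_cons, hq, List.map_cons, hb1]

lemma star_leaf_not_adj {α β : Type*} {a b : α ⊕ β}
    (h : (completeBipartiteGraph α β).Adj a b) (ha : a.isRight) (hb : b.isRight) : False := by
  rcases h with ⟨h1, _⟩ | ⟨_, h2⟩
  · cases a <;> simp_all
  · cases b <;> simp_all

lemma walk_const_fst {n : ℕ} {W : Type*} {H : SimpleGraph W} :
    ∀ {x y : (Fin 1 ⊕ Fin n) × W}
      (p : (lexProd (completeBipartiteGraph (Fin 1) (Fin n)) H).Walk x y),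
      (∀ z ∈ p.support, (z.1).isRight) → ∀ z ∈ p.support, z.1 = x.1 := by
  intro x y p
  induction p with
  | nil =>
    intro _ z hz
    rw [SimpleGraph.Walk.support_nil, List.mem_singleton] at hz
    rw [hz]
  | @cons a b c h p ih =>
    intro hleaf
    have hma : (a.1).isRight := hleaf a (by
      rw [SimpleGraph.Walk.support_cons]; exact List.mem_cons_self)
    have hmb : (b.1).isRight := hleaf b (by
      rw [SimpleGraph.Walk.support_cons]
      exact List.mem_cons_of_mem _ p.start_mem_support)
    have hb1 : b.1 = a.1 := by
      rcases h with hg | ⟨he, _⟩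
      · exact absurd hg (fun hg' => star_leaf_not_adj hg' hma hmb)
      · exact he.symm
    intro z hz
    rw [SimpleGraph.Walk.support_cons] at hz
    rcases List.mem_cons.mp hz with rfl | hz'
    · rfl
    · exact (ih (fun z' hz'' => hleaf z' (by
        rw [SimpleGraph.Walk.support_cons]; exact List.mem_cons_of_mem _ hz'')) z hz').trans hb1

end Helpers
open SimpleGraph in
lemma lower_aux {V W : Type*} [Fintype W] [Nonempty W] {G : SimpleGraph V} {H : SimpleGraph W}
    {k : ℕ} {ψ : V × W → Fin k} (hψ : NonRepColoring (lexProd G H) ψ)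
    {s1 s2 : V} (hadj : G.Adj s1 s2)
    (hinj : Function.Injective (fun w => ψ (s2, w))) :
    thueNumber H + Fintype.card W ≤ k := by
  classical
  -- colours of the two copies are disjoint
  have hdisj : ∀ w w' : W, ψ (s1, w) ≠ ψ (s2, w') := by
    intro w w' h
    have hadj' : (lexProd G H).Adj (s1, w) (s2, w') := Or.inl hadj
    set p : (lexProd G H).Walk (s1, w) (s2, w') :=
      SimpleGraph.Walk.cons hadj' SimpleGraph.Walk.nil with hp
    have hpath : p.IsPath := by
      apply SimpleGraph.Walk.IsPath.mk'
      simp [hp, Prod.ext_iff, hadj.ne]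
    refine hψ p hpath ⟨[ψ (s1, w)], by simp, ?_⟩
    simp [hp, h]
  set B : Finset (Fin k) := Finset.image (fun w => ψ (s2, w)) Finset.univ with hBdef
  have hB : B.card = Fintype.card W := by
    rw [hBdef, Finset.card_image_of_injective _ hinj, Finset.card_univ]
  have hkW : Fintype.card W ≤ k := by
    have := Finset.card_le_univ B
    rwa [hB, Fintype.card_fin] at this
  have hcopy : NonRepColoring H (fun w => ψ (s1, w)) := nonRep_copy s1 hψ
  set C : Finset (Fin k) := Finset.univ \ B with hCdef
  have hCcard : C.card = k - Fintype.card W := by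
    rw [hCdef, Finset.card_sdiff_of_subset (Finset.subset_univ _), Finset.card_univ, Fintype.card_fin, hB]
  have hmemC : ∀ w : W, ψ (s1, w) ∈ C := by
    intro w
    rw [hCdef, Finset.mem_sdiff]
    refine ⟨Finset.mem_univ _, ?_⟩
    rw [hBdef, Finset.mem_image]
    rintro ⟨w', -, h⟩
    exact hdisj w w' h.symm
  have hCpos : 0 < k - Fintype.card W := by
    rw [← hCcard]
    exact Finset.card_pos.mpr ⟨ψ (s1, Classical.arbitrary W), hmemC _⟩
  let e : C ≃ Fin C.card := C.equivFin
  let θ : Fin k → Fin (k - Fintype.card W) :=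
    fun x => if h : x ∈ C then Fin.cast hCcard (e ⟨x, h⟩) else ⟨0, hCpos⟩
  have hθ : Set.InjOn θ (↑C : Set (Fin k)) := by
    intro a ha b hb h
    rw [Finset.mem_coe] at ha hb
    simp only [θ, dif_pos ha, dif_pos hb] at h
    have hval := congrArg Fin.val h
    simp only [Fin.coe_cast] at hval
    exact congrArg Subtype.val (e.injective (Fin.ext hval))
  have hφ' : NonRepColoring H (fun w => θ (ψ (s1, w))) := by
    intro u v q hq hrep
    refine hcopy q hq ?_
    refine isRepetition_of_map hθ ?_ ?_
    · intro x hx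
      rw [List.mem_map] at hx
      obtain ⟨w, -, rfl⟩ := hx
      exact hmemC w
    · simpa only [List.map_map, Function.comp_def] using hrep
  have hth : thueNumber H ≤ k - Fintype.card W := Nat.sInf_le ⟨_, hφ'⟩
  omega
open SimpleGraph in
lemma upper_aux {W : Type*} [Fintype W] {H : SimpleGraph W} (n : ℕ) {m : ℕ}
    (φ : W → Fin m) (hφ : NonRepColoring H φ) :
    ∃ ψ : (Fin 1 ⊕ Fin n) × W → Fin (m + Fintype.card W),
      NonRepColoring (lexProd (completeBipartiteGraph (Fin 1) (Fin n)) H) ψ := by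
  classical
  set ι : W ≃ Fin (Fintype.card W) := Fintype.equivFin W with hι
  refine ⟨fun x => Sum.elim (fun _ => Fin.natAdd m (ι x.2))
    (fun _ => Fin.castAdd (Fintype.card W) (φ x.2)) x.1, ?_⟩
  set ψ : (Fin 1 ⊕ Fin n) × W → Fin (m + Fintype.card W) :=
    fun x => Sum.elim (fun _ => Fin.natAdd m (ι x.2))
      (fun _ => Fin.castAdd (Fintype.card W) (φ x.2)) x.1 with hψdef
  have hψ_inl : ∀ (x : (Fin 1 ⊕ Fin n) × W) (a : Fin 1), x.1 = Sum.inl a →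
      ψ x = Fin.natAdd m (ι x.2) := by
    rintro ⟨x1, x2⟩ a h
    simp only at h
    rw [hψdef]
    simp only [h, Sum.elim_inl]
  have hψ_inr : ∀ (x : (Fin 1 ⊕ Fin n) × W) (b : Fin n), x.1 = Sum.inr b →
      ψ x = Fin.castAdd (Fintype.card W) (φ x.2) := by
    rintro ⟨x1, x2⟩ b h
    simp only at h
    rw [hψdef]
    simp only [h, Sum.elim_inr]
  intro x y p hp hrep
  obtain ⟨u0, hu0, heq⟩ := hrep
  set m' := u0.length with hm'
  have hm'pos : 0 < m' := List.length_pos_iff.mpr hu0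
  have hlen : p.support.length = m' + m' := by
    have := congrArg List.length heq
    simpa using this
  have hnd : p.support.Nodup := hp.support_nodup
  -- colours repeat with period m'
  have hpair : ∀ i, i < m' → ∀ (h1 : i < p.support.length) (h2 : i + m' < p.support.length),
      ψ (p.support[i]'h1) = ψ (p.support[i + m']'h2) := by
    intro i hi h1 h2
    have e1 : (p.support.map ψ)[i]'(by simpa using h1) = ψ (p.support[i]'h1) :=
      List.getElem_map ψ
    have e2 : (p.support.map ψ)[i + m']'(by simpa using h2) = ψ (p.support[i + m']'h2) :=
      List.getElem_map ψ
    have f1 : (p.support.map ψ)[i]'(by simpa using h1) = (u0 ++ u0)[i]'(by simp [hlen] at h1 ⊢; omega) :=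
      List.getElem_of_eq heq _
    have f2 : (p.support.map ψ)[i + m']'(by simpa using h2) = (u0 ++ u0)[i + m']'(by simp [hlen] at h2 ⊢; omega) :=
      List.getElem_of_eq heq _
    rw [List.getElem_append_left hi] at f1
    rw [List.getElem_append_right (by omega)] at f2
    rw [← e1, ← e2, f1, f2]
    congr 1
    omega
  -- every vertex of the path lies in a leaf copy
  have hleaf : ∀ z ∈ p.support, (z.1).isRight := by
    intro z hz
    obtain ⟨i, hi, rfl⟩ := List.getElem_of_mem hz
    by_contra hnr
    obtain ⟨a, ha⟩ : ∃ a, (p.support[i]'hi).1 = Sum.inl a := by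
      cases h : (p.support[i]'hi).1 with
      | inl a => exact ⟨a, rfl⟩
      | inr b => rw [h] at hnr; simp at hnr
    have hij : ∀ (j : ℕ) (hj : j < p.support.length), i ≠ j →
        ψ (p.support[i]'hi) = ψ (p.support[j]'hj) → False := by
      intro j hj hne hψeq
      cases hb : (p.support[j]'hj).1 with
      | inl a' =>
        have e1 := hψ_inl _ a ha
        have e2 := hψ_inl _ a' hb
        rw [e1, e2] at hψeq
        have hval := congrArg Fin.val hψeq
        simp only [Fin.coe_natAdd] at hval
        have hsnd : (p.support[i]'hi).2 = (p.support[j]'hj).2 :=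
          ι.injective (Fin.ext (by omega))
        have hfst : (p.support[i]'hi).1 = (p.support[j]'hj).1 := by
          rw [ha, hb, Subsingleton.elim a a']
        have : p.support[i]'hi = p.support[j]'hj := Prod.ext hfst hsnd
        exact hne (hnd.getElem_inj_iff.mp this)
      | inr b' =>
        have e1 := hψ_inl _ a ha
        have e2 := hψ_inr _ b' hb
        rw [e1, e2] at hψeq
        have hval := congrArg Fin.val hψeq
        simp only [Fin.coe_natAdd, Fin.coe_castAdd] at hval
        have := (φ (p.support[j]'hj).2).isLt
        omega
    rcases lt_or_ge i m' with hlt | hge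
    · exact hij (i + m') (by omega) (by omega) (hpair i hlt hi (by omega))
    · have hi' : i - m' < m' := by omega
      have h2 : i - m' + m' = i := by omega
      refine hij (i - m') (by omega) (by omega) ?_
      have h3 := hpair (i - m') hi' (by omega) (by omega)
      have h4 : p.support[i - m' + m']'(by omega) = p.support[i]'hi := by
        congr 1
      rw [h4] at h3
      exact h3.symm
  -- hence the whole path lies in a single leaf copy
  have hconst := walk_const_fst p hleaf
  obtain ⟨q, hq⟩ := lift_walk p hconst
  obtain ⟨b, hb⟩ : ∃ b, x.1 = Sum.inr b :=
    Sum.isRight_iff.mp (hleaf x p.start_mem_support)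
  have hqpath : q.IsPath := by
    apply SimpleGraph.Walk.IsPath.mk'
    have := hnd
    rw [hq] at this
    exact this.of_map _
  refine hφ q hqpath (isRepetition_of_map_inj (θ := Fin.castAdd (Fintype.card W))
    (fun a b h => Fin.ext (by simpa using congrArg Fin.val h)) ?_)
  have hcol : p.support.map ψ = (q.support.map φ).map (Fin.castAdd (Fintype.card W)) := by
    rw [hq, List.map_map, List.map_map]
    apply List.map_congr_left
    intro w _
    exact hψ_inr (x.1, w) b hb
  rw [← hcol]
  exact ⟨u0, hu0, heq⟩
/-- `π(S_n ∘ H) = π(H) + |V(H)|` where `S_n = K_{1,n}`. -/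
theorem thueNumber_lexProd_star {W : Type*} [Fintype W] (H : SimpleGraph W)
    (n : ℕ) (hn : 1 ≤ n) :
    thueNumber (lexProd (completeBipartiteGraph (Fin 1) (Fin n)) H) =
      thueNumber H + Fintype.card W := by
  classical
  rcases isEmpty_or_nonempty W with hW | hW
  · have h1 : thueNumber H = 0 := by
      apply Nat.sInf_eq_zero.mpr
      left
      refine ⟨fun w => isEmptyElim w, ?_⟩
      intro u
      exact isEmptyElim u
    have h2 : thueNumber (lexProd (completeBipartiteGraph (Fin 1) (Fin n)) H) = 0 := by
      apply Nat.sInf_eq_zero.mpr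
      left
      refine ⟨fun x => isEmptyElim x.2, ?_⟩
      intro u
      exact isEmptyElim u.2
    rw [h1, h2, Fintype.card_eq_zero]
  · have hne : {k | ∃ φ : W → Fin k, NonRepColoring H φ}.Nonempty :=
      ⟨Fintype.card W, ⇑(Fintype.equivFin W), nonRep_of_injective H (Fintype.equivFin W).injective⟩
    obtain ⟨φ, hφ⟩ : ∃ φ : W → Fin (thueNumber H), NonRepColoring H φ := Nat.sInf_mem hne
    obtain ⟨ψ, hψ⟩ := upper_aux n φ hφ
    have hub : thueNumber H + Fintype.card W ∈ {k | ∃ ψ' : (Fin 1 ⊕ Fin n) × W → Fin k,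
        NonRepColoring (lexProd (completeBipartiteGraph (Fin 1) (Fin n)) H) ψ'} := ⟨ψ, hψ⟩
    refine le_antisymm (Nat.sInf_le hub) (le_csInf ⟨_, hub⟩ ?_)
    rintro k ⟨ψ', hψ'⟩
    set c : Fin 1 ⊕ Fin n := Sum.inl 0 with hc
    set l : Fin 1 ⊕ Fin n := Sum.inr ⟨0, hn⟩ with hl
    have hadj : (completeBipartiteGraph (Fin 1) (Fin n)).Adj c l := by
      simp [completeBipartiteGraph, hc, hl]
    have hinj : Function.Injective (fun w => ψ' (c, w)) ∨
        Function.Injective (fun w => ψ' (l, w)) := by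
      by_contra hcon
      push_neg at hcon
      obtain ⟨h1, h2⟩ := hcon
      rw [Function.not_injective_iff] at h1 h2
      obtain ⟨u, u', hu, hune⟩ := h1
      obtain ⟨v, v', hv, hvne⟩ := h2
      have e1 : (lexProd (completeBipartiteGraph (Fin 1) (Fin n)) H).Adj (c, u) (l, v) :=
        Or.inl hadj
      have e2 : (lexProd (completeBipartiteGraph (Fin 1) (Fin n)) H).Adj (l, v) (c, u') :=
        Or.inl hadj.symm
      have e3 : (lexProd (completeBipartiteGraph (Fin 1) (Fin n)) H).Adj (c, u') (l, v') :=
        Or.inl hadj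
      set p := SimpleGraph.Walk.cons e1 (SimpleGraph.Walk.cons e2
        (SimpleGraph.Walk.cons e3 SimpleGraph.Walk.nil)) with hp
      have hpath : p.IsPath := by
        apply SimpleGraph.Walk.IsPath.mk'
        simp [hp, Prod.ext_iff, hune, hvne, hc, hl]
      refine hψ' p hpath ⟨[ψ' (c, u), ψ' (l, v)], by simp, ?_⟩
      simp [hp, hu, hv]
    rcases hinj with hinj | hinj
    · exact lower_aux hψ' hadj.symm hinj
    · exact lower_aux hψ' hadj hinj
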